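/- Let G be a group in 𝒞_D containing all zero-distributed pairs ({C_n}, 0) with {C_n} ∼_σ 0. Assume (i) the set of symbols of G, {k : ∃ {A_n}, ({A_n},k) ∈ G}, is dense in the space of measurable functions D → ℂ with respect to the metric d_m, and (ii) G is closed: whenever ({B_{n,m}}_n, k_m) ∈ G for all m, d_acs({B_{n,m}}_n, {A_n}) → 0 and d_m(k_m, k) → 0, then ({A_n}, k) ∈ G. Then every measurable function k : D → ℂ is a symbol for G, i.e., there exists {A_n} ∈ 𝔈 with ({A_n}, k) ∈ G. -/

import Mathlib

open MeasureTheory Filter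
open scoped ENNReal NNReal

/-- The singular values of a complex square matrix, arranged in non-increasing order:
`sv A 0 = σ₁(A) ≥ sv A 1 = σ₂(A) ≥ …` (the square roots of the eigenvalues of `Aᴴ * A`). -/
noncomputable def sv {n : ℕ} (A : Matrix (Fin n) (Fin n) ℂ) : Fin n → ℝ :=
  fun i =>
    (fun j => Real.sqrt ((Matrix.isHermitian_conjTranspose_mul_self A).eigenvalues j))
      (Tuple.sort (fun j => Real.sqrt ((Matrix.isHermitian_conjTranspose_mul_self A).eigenvalues j))
        i.rev)

/-- `p(A) := min_{1 ≤ i ≤ n} ((i-1)/n + σᵢ(A))` (here `i : Fin n` plays the role of `i-1`). -/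
noncomputable def pA {n : ℕ} (A : Matrix (Fin n) (Fin n) ℂ) : ℝ :=
  ⨅ i : Fin n, (((i : ℕ) : ℝ) / n + sv A i)

/-- `ρ({A_n}) := limsup_{n→∞} p(A_n)`, valued in `[0,∞]`. -/
noncomputable def rho (A : (n : ℕ) → Matrix (Fin n) (Fin n) ℂ) : ℝ≥0∞ :=
  Filter.limsup (fun n => ENNReal.ofReal (pA (A n))) Filter.atTop

/-- The a.c.s. pseudometric `d_acs({A_n},{B_n}) := ρ({A_n − B_n})`. -/
noncomputable def dacs (A B : (n : ℕ) → Matrix (Fin n) (Fin n) ℂ) : ℝ≥0∞ :=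
  rho (fun n => A n - B n)

/-- `{A_n} ∼_σ k` : the sequence `{A_n}` has spectral (singular value) symbol `k` on `D`. -/
def SpecSymb {d : ℕ} (D : Set (Fin d → ℝ)) (A : (n : ℕ) → Matrix (Fin n) (Fin n) ℂ)
    (k : (Fin d → ℝ) → ℂ) : Prop :=
  ∀ F : ℝ → ℂ, Continuous F → HasCompactSupport F →
    Filter.Tendsto (fun n : ℕ => (n : ℂ)⁻¹ * ∑ i : Fin n, F (sv (A n) i)) Filter.atTop
      (nhds ((volume D).toReal⁻¹ • ∫ x in D, F ‖k x‖))

/-- `p_m(f) := inf_{E ⊆ D measurable} ( |D∖E|/|D| + esssup_{x∈E} |f(x)| )`, valued in `[0,∞]`. -/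
noncomputable def pm {d : ℕ} (D : Set (Fin d → ℝ)) (f : (Fin d → ℝ) → ℂ) : ℝ≥0∞ :=
  ⨅ (E : Set (Fin d → ℝ)) (_ : MeasurableSet E) (_ : E ⊆ D),
    (volume (D \ E) / volume D + essSup (fun x => (‖f x‖₊ : ℝ≥0∞)) (volume.restrict E))

/-- `d_m(f,g) := p_m(f − g)`. -/
noncomputable def dm {d : ℕ} (D : Set (Fin d → ℝ)) (f g : (Fin d → ℝ) → ℂ) : ℝ≥0∞ :=
  pm D (fun x => f x - g x)

/-- A "group in 𝒞_D": a set `G` of pairs `({A_n}, k)` with `k` measurable and `{A_n} ∼_σ k`,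
closed under addition and negation. -/
def IsGroupIn {d : ℕ} (D : Set (Fin d → ℝ))
    (G : Set (((n : ℕ) → Matrix (Fin n) (Fin n) ℂ) × ((Fin d → ℝ) → ℂ))) : Prop :=
  (∀ p ∈ G, Measurable p.2 ∧ SpecSymb D p.1 p.2) ∧
  (∀ p ∈ G, ∀ q ∈ G, ((fun n => p.1 n + q.1 n), p.2 + q.2) ∈ G) ∧
  (∀ p ∈ G, ((fun n => -(p.1 n)), -p.2) ∈ G)

section helpers

variable {d : ℕ} {D : Set (Fin d → ℝ)}

lemma sv_nonneg {n : ℕ} (A : Matrix (Fin n) (Fin n) ℂ) (i : Fin n) : 0 ≤ sv A i :=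
  Real.sqrt_nonneg _

lemma sv_antitone {n : ℕ} (A : Matrix (Fin n) (Fin n) ℂ) : Antitone (sv A) := by
  intro i j hij
  exact Tuple.monotone_sort
    (fun j => Real.sqrt ((Matrix.isHermitian_conjTranspose_mul_self A).eigenvalues j))
    (Fin.rev_le_rev.mpr hij)

lemma pm_congr (f g : (Fin d → ℝ) → ℂ) (h : ∀ x, ‖f x‖₊ = ‖g x‖₊) : pm D f = pm D g := by
  have hfg : (fun x => (‖f x‖₊ : ℝ≥0∞)) = fun x => (‖g x‖₊ : ℝ≥0∞) :=
    funext fun x => by rw [h x]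
  simp only [pm, hfg]

lemma dm_comm (f g : (Fin d → ℝ) → ℂ) : dm D f g = dm D g f :=
  pm_congr _ _ fun x => by rw [← neg_sub, nnnorm_neg]

lemma pm_lt_iff {f : (Fin d → ℝ) → ℂ} {c : ℝ≥0∞} (h : pm D f < c) :
    ∃ E, MeasurableSet E ∧ E ⊆ D ∧
      volume (D \ E) / volume D + essSup (fun x => (‖f x‖₊ : ℝ≥0∞)) (volume.restrict E) < c := by
  simp only [pm, iInf_lt_iff] at h
  obtain ⟨E, hE, hED, hv⟩ := h
  exact ⟨E, hE, hED, hv⟩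

lemma pm_add_le (f g : (Fin d → ℝ) → ℂ) :
    pm D (fun x => f x + g x) ≤ pm D f + pm D g := by
  refine ENNReal.le_of_forall_pos_le_add fun ε hε hlt => ?_
  have hf : pm D f ≠ ∞ := fun h => by simp [h] at hlt
  have hg : pm D g ≠ ∞ := fun h => by simp [h] at hlt
  have hε2 : ((ε : ℝ≥0∞) / 2) ≠ 0 :=
    (ENNReal.half_pos (by exact_mod_cast hε.ne')).ne'
  obtain ⟨E1, hE1m, hE1D, hv1⟩ := pm_lt_iff (D := D) (f := f)
    (ENNReal.lt_add_right hf hε2)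
  obtain ⟨E2, hE2m, hE2D, hv2⟩ := pm_lt_iff (D := D) (f := g)
    (ENNReal.lt_add_right hg hε2)
  have hstep : pm D (fun x => f x + g x) ≤
      volume (D \ (E1 ∩ E2)) / volume D +
        essSup (fun x => (‖f x + g x‖₊ : ℝ≥0∞)) (volume.restrict (E1 ∩ E2)) := by
    exact iInf_le_of_le (E1 ∩ E2) (iInf_le_of_le (hE1m.inter hE2m)
      (iInf_le_of_le (fun x hx => hE1D hx.1) le_rfl))
  have hvol : volume (D \ (E1 ∩ E2)) / volume D ≤
      volume (D \ E1) / volume D + volume (D \ E2) / volume D := by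
    rw [← ENNReal.add_div]
    apply ENNReal.div_le_div_right
    rw [Set.diff_inter]
    exact measure_union_le _ _
  have hess : essSup (fun x => (‖f x + g x‖₊ : ℝ≥0∞)) (volume.restrict (E1 ∩ E2)) ≤
      essSup (fun x => (‖f x‖₊ : ℝ≥0∞)) (volume.restrict E1) +
        essSup (fun x => (‖g x‖₊ : ℝ≥0∞)) (volume.restrict E2) := by
    have hac1 : volume.restrict (E1 ∩ E2) ≪ volume.restrict E1 :=
      Measure.absolutelyContinuous_of_le (Measure.restrict_mono Set.inter_subset_left le_rfl)
    have hac2 : volume.restrict (E1 ∩ E2) ≪ volume.restrict E2 :=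
      Measure.absolutelyContinuous_of_le (Measure.restrict_mono Set.inter_subset_right le_rfl)
    have h1 := essSup_mono_measure (f := fun x => (‖f x‖₊ : ℝ≥0∞)) hac1
    have h2 := essSup_mono_measure (f := fun x => (‖g x‖₊ : ℝ≥0∞)) hac2
    refine le_trans (essSup_le_of_ae_le _ ?_) (add_le_add h1 h2)
    filter_upwards [ENNReal.ae_le_essSup (μ := volume.restrict (E1 ∩ E2))
        (fun x => (‖f x‖₊ : ℝ≥0∞)),
      ENNReal.ae_le_essSup (μ := volume.restrict (E1 ∩ E2)) (fun x => (‖g x‖₊ : ℝ≥0∞))] with x h1' h2'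
    calc (‖f x + g x‖₊ : ℝ≥0∞) ≤ (‖f x‖₊ : ℝ≥0∞) + (‖g x‖₊ : ℝ≥0∞) := by
          exact_mod_cast nnnorm_add_le _ _
      _ ≤ _ := add_le_add h1' h2'
  calc pm D (fun x => f x + g x) ≤ _ := hstep
    _ ≤ (volume (D \ E1) / volume D +
          essSup (fun x => (‖f x‖₊ : ℝ≥0∞)) (volume.restrict E1)) +
        (volume (D \ E2) / volume D +
          essSup (fun x => (‖g x‖₊ : ℝ≥0∞)) (volume.restrict E2)) := by
        calc volume (D \ (E1 ∩ E2)) / volume D +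
              essSup (fun x => (‖f x + g x‖₊ : ℝ≥0∞)) (volume.restrict (E1 ∩ E2)) ≤
            (volume (D \ E1) / volume D + volume (D \ E2) / volume D) +
              (essSup (fun x => (‖f x‖₊ : ℝ≥0∞)) (volume.restrict E1) +
                essSup (fun x => (‖g x‖₊ : ℝ≥0∞)) (volume.restrict E2)) :=
            add_le_add hvol hess
          _ = _ := by ring
    _ ≤ (pm D f + (ε : ℝ≥0∞) / 2) + (pm D g + (ε : ℝ≥0∞) / 2) :=
        add_le_add hv1.le hv2.le
    _ = pm D f + pm D g + ((ε : ℝ≥0∞) / 2 + (ε : ℝ≥0∞) / 2) := by ring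
    _ = pm D f + pm D g + ε := by rw [ENNReal.add_halves]

lemma pm_triangle (f g h : (Fin d → ℝ) → ℂ) :
    pm D (fun x => f x - h x) ≤ pm D (fun x => f x - g x) + pm D (fun x => g x - h x) := by
  have := pm_add_le (D := D) (fun x => f x - g x) (fun x => g x - h x)
  simpa only [sub_add_sub_cancel] using this

end helpers

lemma rho_le_of_symb {d : ℕ} {D : Set (Fin d → ℝ)}
    (hD0 : 0 < volume D) (hDfin : volume D < ⊤)
    {C : (n : ℕ) → Matrix (Fin n) (Fin n) ℂ} {g : (Fin d → ℝ) → ℂ}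
    (hg : Measurable g) (hsymb : SpecSymb D C g)
    {E : Set (Fin d → ℝ)} (hE : MeasurableSet E) (hED : E ⊆ D) (hE0 : 0 < volume E)
    (ht : essSup (fun x => (‖g x‖₊ : ℝ≥0∞)) (volume.restrict E) ≠ ⊤)
    {ε : ℝ} (hε : 0 < ε) :
    rho C ≤ volume (D \ E) / volume D
      + essSup (fun x => (‖g x‖₊ : ℝ≥0∞)) (volume.restrict E) + ENNReal.ofReal (2 * ε) := by
  -- real quantities
  set t := essSup (fun x => (‖g x‖₊ : ℝ≥0∞)) (volume.restrict E) with ht_def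
  set s := t.toReal with hs_def
  have hs0 : 0 ≤ s := ENNReal.toReal_nonneg
  have hVEfin : volume E < ⊤ := lt_of_le_of_lt (measure_mono hED) hDfin
  have hVDEfin : volume (D \ E) < ⊤ := lt_of_le_of_lt (measure_mono Set.diff_subset) hDfin
  set VD := (volume D).toReal with hVD_def
  set VE := (volume E).toReal with hVE_def
  set VDE := (volume (D \ E)).toReal with hVDE_def
  have hVD : 0 < VD := ENNReal.toReal_pos hD0.ne' hDfin.ne
  have hVE : 0 < VE := ENNReal.toReal_pos hE0.ne' hVEfin.ne
  have hVDE0 : 0 ≤ VDE := ENNReal.toReal_nonneg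
  have hsplit : VE + VDE = VD := by
    rw [hVE_def, hVDE_def, hVD_def, ← ENNReal.toReal_add hVEfin.ne hVDEfin.ne]
    congr 1
    rw [measure_add_diff hE.nullMeasurableSet D, Set.union_eq_self_of_subset_left hED]
  set δr := VDE / VD with hδr_def
  have hδr0 : 0 ≤ δr := div_nonneg hVDE0 hVD.le
  have hδr1 : δr = 1 - VE / VD := by
    field_simp [hδr_def]
    have hh : δr * VD = VDE := by rw [hδr_def, div_mul_cancel₀ _ hVD.ne']
    linarith
  set η := min ε (VE / (2 * VD)) with hη_def
  have hη : 0 < η := lt_min hε (by positivity)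
  have hηε : η ≤ ε := min_le_left _ _
  -- the test function
  set F : ℝ → ℝ := fun x => max 0 (min 1 ((s + ε - |x|) / ε)) with hF_def
  have hFcont : Continuous F :=
    continuous_const.max (continuous_const.min ((continuous_const.sub continuous_abs).div_const ε))
  have hF0 : ∀ x, 0 ≤ F x := fun x => le_max_left _ _
  have hF1 : ∀ x, F x ≤ 1 := fun x => max_le zero_le_one (min_le_left _ _)
  have hFone : ∀ x, |x| ≤ s → F x = 1 := by
    intro x hx
    have h1 : (1 : ℝ) ≤ (s + ε - |x|) / ε := by
      rw [le_div_iff₀ hε]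
      linarith
    simp only [hF_def]
    rw [min_eq_left h1, max_eq_right zero_le_one]
  have hFzero : ∀ x, s + ε ≤ |x| → F x = 0 := by
    intro x hx
    have h1 : (s + ε - |x|) / ε ≤ 0 := div_nonpos_of_nonpos_of_nonneg (by linarith) hε.le
    simp only [hF_def]
    rw [max_eq_left (le_trans (min_le_right _ _) h1)]
  have hFsupp : HasCompactSupport F := by
    refine HasCompactSupport.intro (isCompact_Icc (a := -(s + ε)) (b := s + ε)) ?_
    intro x hx
    apply hFzero
    by_contra hlt
    push_neg at hlt
    exact hx ⟨(abs_lt.mp hlt).1.le, (abs_lt.mp hlt).2.le⟩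
  -- apply the spectral symbol hypothesis
  set Fc : ℝ → ℂ := fun x => ((F x : ℝ) : ℂ) with hFc_def
  have hFcc : Continuous Fc := Complex.continuous_ofReal.comp hFcont
  have hFcs : HasCompactSupport Fc := hFsupp.comp_left (g := fun r : ℝ => (r : ℂ)) (by simp)
  have hT := hsymb Fc hFcc hFcs
  set S : ℕ → ℝ := fun n => (n : ℝ)⁻¹ * ∑ i : Fin n, F (sv (C n) i) with hS_def
  set cL : ℝ := VD⁻¹ * ∫ x in D, F ‖g x‖ with hcL_def
  have hSc : Tendsto S atTop (nhds cL) := by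
    have heq : (fun n : ℕ => (n : ℂ)⁻¹ * ∑ i : Fin n, Fc (sv (C n) i)) =
        fun n : ℕ => ((S n : ℝ) : ℂ) := by
      funext n
      simp only [hS_def, hFc_def]
      push_cast
      ring
    have heq2 : ((volume D).toReal⁻¹ • ∫ x in D, Fc ‖g x‖) = ((cL : ℝ) : ℂ) := by
      simp only [hFc_def, hcL_def, hVD_def, Complex.real_smul]
      have hint : (∫ x in D, ((F ‖g x‖ : ℝ) : ℂ)) = (((∫ x in D, F ‖g x‖ : ℝ)) : ℂ) :=
        integral_ofReal
      rw [Complex.ofReal_mul, hint]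
    rw [heq, heq2] at hT
    have := (Complex.continuous_re.tendsto _).comp hT
    simpa [Function.comp_def] using this
  -- lower bound for the limit
  have hInt : IntegrableOn (fun x => F ‖g x‖) D volume := by
    refine Measure.integrableOn_of_bounded hDfin.ne
      ((hFcont.measurable.comp hg.norm).aestronglyMeasurable) (M := 1) ?_
    filter_upwards with x
    rw [Real.norm_eq_abs, abs_of_nonneg (hF0 _)]
    exact hF1 _
  have hEint : ∫ x in E, F ‖g x‖ = VE := by
    have hae : ∀ᵐ x ∂(volume.restrict E), F ‖g x‖ = 1 := by
      filter_upwards [ENNReal.ae_le_essSup (μ := volume.restrict E)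
        (fun x => (‖g x‖₊ : ℝ≥0∞))] with x hx
      apply hFone
      rw [abs_of_nonneg (norm_nonneg _)]
      have := ENNReal.toReal_mono ht hx
      simpa [hs_def] using this
    rw [integral_congr_ae hae]
    simp [hVE_def, measureReal_def]
  have hDE : ∫ x in E, F ‖g x‖ ≤ ∫ x in D, F ‖g x‖ := by
    refine setIntegral_mono_set hInt ?_ (HasSubset.Subset.eventuallyLE hED)
    filter_upwards with x
    exact hF0 _
  have hlow : VE / VD ≤ cL := by
    rw [hcL_def, div_eq_inv_mul]
    apply mul_le_mul_of_nonneg_left _ (inv_nonneg.mpr hVD.le)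
    rw [← hEint]
    exact hDE
  -- eventual bound on pA
  have hev : ∀ᶠ n in atTop, ENNReal.ofReal (pA (C n)) ≤ ENNReal.ofReal (δr + s + 2 * ε) := by
    filter_upwards [hSc.eventually (eventually_gt_nhds (sub_lt_self cL hη)),
      eventually_ge_atTop 1] with n hSn hn1
    apply ENNReal.ofReal_le_ofReal
    have hn0 : (0:ℝ) < n := by exact_mod_cast hn1
    classical
    set T : Finset (Fin n) := Finset.univ.filter (fun i => s + ε ≤ sv (C n) i) with hT_def
    set r : ℕ := T.card with hr_def
    have hrn : r ≤ n := by
      rw [hr_def]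
      calc T.card ≤ (Finset.univ : Finset (Fin n)).card := Finset.card_le_card (by simp [hT_def])
        _ = n := by simp
    have hsum_le : ∑ i : Fin n, F (sv (C n) i) ≤ (n : ℝ) - r := by
      rw [← Finset.sum_filter_add_sum_filter_not Finset.univ
        (fun i => s + ε ≤ sv (C n) i) (fun i => F (sv (C n) i))]
      have h0 : ∑ i ∈ Finset.univ.filter (fun i => s + ε ≤ sv (C n) i),
          F (sv (C n) i) = 0 := by
        apply Finset.sum_eq_zero
        intro i hi
        rw [Finset.mem_filter] at hi
        exact hFzero _ (by rw [abs_of_nonneg (sv_nonneg _ _)]; exact hi.2)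
      rw [h0, zero_add]
      have h1 : ∑ i ∈ Finset.univ.filter (fun i => ¬ (s + ε ≤ sv (C n) i)), F (sv (C n) i)
          ≤ ((Finset.univ.filter (fun i => ¬ (s + ε ≤ sv (C n) i))).card : ℝ) := by
        have := Finset.sum_le_card_nsmul
          (Finset.univ.filter (fun i => ¬ (s + ε ≤ sv (C n) i)))
          (fun i => F (sv (C n) i)) 1 (fun i _ => hF1 _)
        simpa using this
      refine h1.trans ?_
      have hcards : (Finset.univ.filter (fun i => ¬ (s + ε ≤ sv (C n) i))).card = n - r := by
        have := Finset.card_filter_add_card_filter_not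
          (s := (Finset.univ : Finset (Fin n))) (fun i => s + ε ≤ sv (C n) i)
        simp only [Finset.card_univ, Fintype.card_fin] at this
        rw [← hT_def, ← hr_def] at this
        omega
      rw [hcards, Nat.cast_sub hrn]
    have hS_eq : (n:ℝ) * S n = ∑ i : Fin n, F (sv (C n) i) := by
      simp only [hS_def]
      field_simp
    have h3 : 1 - S n ≤ δr + η := by
      rw [hδr1]
      linarith [hlow, hSn]
    have hr_le : (r : ℝ) ≤ n * (δr + η) := by
      have h2 : (n:ℝ) * S n ≤ (n:ℝ) - r := by rw [hS_eq]; exact hsum_le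
      nlinarith
    have hhalf : VE/(2*VD) = (VE/VD)/2 := by ring
    have hδη : δr + η ≤ 1 - VE/(2*VD) := by
      have hm : η ≤ VE/(2*VD) := min_le_right _ _
      rw [hδr1, hhalf] at *
      linarith
    have hrn_lt : r < n := by
      have hp : 0 < VE/(2*VD) := by positivity
      have : (r:ℝ) < n := by nlinarith
      exact_mod_cast this
    have hsv : sv (C n) ⟨r, hrn_lt⟩ < s + ε := by
      by_contra hcon
      push_neg at hcon
      have hsub : Finset.Iic (⟨r, hrn_lt⟩ : Fin n) ⊆ T := by
        intro j hj
        rw [Finset.mem_Iic] at hj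
        rw [hT_def, Finset.mem_filter]
        exact ⟨Finset.mem_univ _, le_trans hcon (sv_antitone (C n) hj)⟩
      have hc := Finset.card_le_card hsub
      rw [Fin.card_Iic] at hc
      simp only at hc
      omega
    have hpa : pA (C n) ≤ (r:ℝ)/n + sv (C n) ⟨r, hrn_lt⟩ := by
      have hbdd : BddBelow (Set.range (fun i : Fin n => ((i:ℕ):ℝ)/n + sv (C n) i)) := by
        refine ⟨0, ?_⟩
        rintro x ⟨i, rfl⟩
        have := sv_nonneg (C n) i
        positivity
      exact ciInf_le hbdd ⟨r, hrn_lt⟩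
    have hr_div : (r:ℝ)/n ≤ δr + η := by
      rw [div_le_iff₀ hn0]
      linarith
    calc pA (C n) ≤ (r:ℝ)/n + sv (C n) ⟨r, hrn_lt⟩ := hpa
      _ ≤ (δr + η) + (s + ε) := add_le_add hr_div hsv.le
      _ ≤ δr + s + 2*ε := by linarith
  -- conclude
  have hlim : rho C ≤ ENNReal.ofReal (δr + s + 2*ε) :=
    limsup_le_of_le (by isBoundedDefault) hev
  refine hlim.trans ?_
  have h1 : ENNReal.ofReal (δr + s + 2*ε) ≤
      ENNReal.ofReal δr + ENNReal.ofReal s + ENNReal.ofReal (2*ε) :=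
    le_trans ENNReal.ofReal_add_le (add_le_add_left ENNReal.ofReal_add_le _)
  refine h1.trans ?_
  have hδ1 : ENNReal.ofReal δr = volume (D \ E) / volume D := by
    rw [hδr_def, hVDE_def, hVD_def, ← ENNReal.toReal_div]
    exact ENNReal.ofReal_toReal (ENNReal.div_lt_top hVDEfin.ne hD0.ne').ne
  have hst : ENNReal.ofReal s = t := by rw [hs_def]; exact ENNReal.ofReal_toReal ht
  rw [hδ1, hst]

lemma rho_le_pm {d : ℕ} {D : Set (Fin d → ℝ)}
    (hD0 : 0 < volume D) (hDfin : volume D < ⊤)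
    {C : (n : ℕ) → Matrix (Fin n) (Fin n) ℂ} {g : (Fin d → ℝ) → ℂ}
    (hg : Measurable g) (hsymb : SpecSymb D C g)
    (hpm : pm D g < 1) {ε : ℝ} (hε : 0 < ε) :
    rho C ≤ pm D g + ENNReal.ofReal (3 * ε) := by
  have hne : pm D g ≠ ∞ := (hpm.trans ENNReal.one_lt_top).ne
  have hofε : (0:ℝ≥0∞) < ENNReal.ofReal ε := ENNReal.ofReal_pos.mpr hε
  have hlt : pm D g < min (pm D g + ENNReal.ofReal ε) 1 :=
    lt_min (ENNReal.lt_add_right hne hofε.ne') hpm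
  obtain ⟨E, hEm, hED, hv⟩ := pm_lt_iff hlt
  have hv1 : volume (D \ E) / volume D +
      essSup (fun x => (‖g x‖₊:ℝ≥0∞)) (volume.restrict E) < 1 :=
    hv.trans_le (min_le_right _ _)
  have hvp : volume (D \ E) / volume D +
      essSup (fun x => (‖g x‖₊:ℝ≥0∞)) (volume.restrict E) < pm D g + ENNReal.ofReal ε :=
    hv.trans_le (min_le_left _ _)
  have ht : essSup (fun x => (‖g x‖₊:ℝ≥0∞)) (volume.restrict E) ≠ ⊤ := by
    intro h
    rw [h, add_top] at hv1
    exact absurd hv1 (by simp)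
  have hE0 : 0 < volume E := by
    by_contra h0
    push_neg at h0
    have hz : volume E = 0 := le_antisymm h0 zero_le
    have hd : volume (D \ E) = volume D := measure_diff_null hz
    rw [hd, ENNReal.div_self hD0.ne' hDfin.ne] at hv1
    exact absurd hv1 (not_lt.mpr le_self_add)
  have hmain := rho_le_of_symb hD0 hDfin hg hsymb hEm hED hE0 ht hε
  calc rho C ≤ _ + ENNReal.ofReal (2*ε) := hmain
    _ ≤ (pm D g + ENNReal.ofReal ε) + ENNReal.ofReal (2*ε) := add_le_add_left hvp.le _
    _ = pm D g + (ENNReal.ofReal ε + ENNReal.ofReal (2*ε)) := by ring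
    _ = pm D g + ENNReal.ofReal (3*ε) := by
        rw [← ENNReal.ofReal_add hε.le (by positivity)]
        congr 1
        ring

/-- if a group `G` in `𝒞_D` contains all zero-distributed pairs, has a dense set
of symbols, and is closed, then every measurable function is a symbol for `G`. -/
theorem every_function_is_symbol {d : ℕ} (D : Set (Fin d → ℝ))
    (hD : MeasurableSet D) (hD0 : 0 < volume D) (hDfin : volume D < ⊤)
    (G : Set (((n : ℕ) → Matrix (Fin n) (Fin n) ℂ) × ((Fin d → ℝ) → ℂ)))
    (hG : IsGroupIn D G)
    (hZ : ∀ C : (n : ℕ) → Matrix (Fin n) (Fin n) ℂ,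
      SpecSymb D C (fun _ => 0) → (C, fun _ => (0 : ℂ)) ∈ G)
    (hdense : ∀ k : (Fin d → ℝ) → ℂ, Measurable k → ∀ ε : ℝ≥0∞, 0 < ε →
      ∃ h : (Fin d → ℝ) → ℂ, (∃ A, (A, h) ∈ G) ∧ dm D k h < ε)
    (hclosed : ∀ (Bm : ℕ → (n : ℕ) → Matrix (Fin n) (Fin n) ℂ)
      (km : ℕ → (Fin d → ℝ) → ℂ)
      (A : (n : ℕ) → Matrix (Fin n) (Fin n) ℂ) (k : (Fin d → ℝ) → ℂ),
      Measurable k → (∀ m, (Bm m, km m) ∈ G) →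
      Filter.Tendsto (fun m => dacs (Bm m) A) Filter.atTop (nhds 0) →
      Filter.Tendsto (fun m => dm D (km m) k) Filter.atTop (nhds 0) → (A, k) ∈ G) :
    ∀ k : (Fin d → ℝ) → ℂ, Measurable k →
      ∃ A : (n : ℕ) → Matrix (Fin n) (Fin n) ℂ, (A, k) ∈ G := by
  intro k hk
  classical
  obtain ⟨hG1, hG2, hG3⟩ := hG
  set c : ℕ → ℝ := fun m => (1/2 : ℝ)^m with hc_def
  have hc_pos : ∀ m, 0 < c m := fun m => by positivity
  have hc_le_one : ∀ m, c m ≤ 1 := fun m => pow_le_one₀ (by norm_num) (by norm_num)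
  have hc_anti : ∀ {m l : ℕ}, m ≤ l → c l ≤ c m := fun h =>
    pow_le_pow_of_le_one (by norm_num) (by norm_num) h
  -- choose approximants
  have hch : ∀ m : ℕ, ∃ hsym AA, (AA, hsym) ∈ G ∧ dm D k hsym < ENNReal.ofReal (c m / 8) := by
    intro m
    obtain ⟨hsym, ⟨AA, hAA⟩, hd⟩ := hdense k hk (ENNReal.ofReal (c m / 8))
      (ENNReal.ofReal_pos.mpr (by positivity))
    exact ⟨hsym, AA, hAA, hd⟩
  choose hs AA hmem hdmk using hch
  -- pm distance between approximants
  have hpm_bound : ∀ m l, pm D (fun x => hs m x - hs l x) ≤ ENNReal.ofReal ((c m + c l)/8) := by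
    intro m l
    have h1 : pm D (fun x => hs m x - hs l x) ≤
        pm D (fun x => hs m x - k x) + pm D (fun x => k x - hs l x) := pm_triangle _ _ _
    have h2 : pm D (fun x => hs m x - k x) ≤ ENNReal.ofReal (c m / 8) := by
      calc pm D (fun x => hs m x - k x) = dm D (hs m) k := rfl
        _ = dm D k (hs m) := dm_comm _ _
        _ ≤ _ := (hdmk m).le
    have h3 : pm D (fun x => k x - hs l x) ≤ ENNReal.ofReal (c l / 8) := (hdmk l).le
    calc pm D (fun x => hs m x - hs l x) ≤ _ := h1
      _ ≤ ENNReal.ofReal (c m/8) + ENNReal.ofReal (c l/8) := add_le_add h2 h3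
      _ = ENNReal.ofReal ((c m + c l)/8) := by
          rw [← ENNReal.ofReal_add (by positivity) (by positivity)]
          congr 1
          ring
  -- rho bound between approximants
  have hrho : ∀ m l, rho (fun n => AA m n - AA l n) ≤ ENNReal.ofReal ((c m + c l)/2) := by
    intro m l
    have hq := hG3 _ (hmem l)
    have hp := hG2 _ (hmem m) _ hq
    obtain ⟨hmeas, hsymb⟩ := hG1 _ hp
    simp only at hmeas hsymb
    have hfun : (hs m + -(hs l)) = fun x => hs m x - hs l x := by
      funext x
      simp [sub_eq_add_neg]
    have hseq : (fun n => AA m n + -(AA l n)) = fun n => AA m n - AA l n := by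
      funext n
      rw [sub_eq_add_neg]
    rw [hfun] at hmeas hsymb
    rw [hseq] at hsymb
    have hpm1 : pm D (fun x => hs m x - hs l x) < 1 := by
      refine lt_of_le_of_lt (hpm_bound m l) ?_
      rw [ENNReal.ofReal_lt_one]
      have := hc_le_one m
      have := hc_le_one l
      linarith
    have hb := rho_le_pm hD0 hDfin hmeas hsymb hpm1 (ε := (c m + c l)/8)
      (by have := hc_pos m; have := hc_pos l; positivity)
    calc rho (fun n => AA m n - AA l n)
        ≤ pm D (fun x => hs m x - hs l x) + ENNReal.ofReal (3*((c m + c l)/8)) := hb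
      _ ≤ ENNReal.ofReal ((c m + c l)/8) + ENNReal.ofReal (3*((c m + c l)/8)) :=
          add_le_add_left (hpm_bound m l) _
      _ = ENNReal.ofReal ((c m + c l)/2) := by
          rw [← ENNReal.ofReal_add (by positivity)
            (by have := hc_pos m; have := hc_pos l; positivity)]
          congr 1
          ring
  -- eventual strict bounds
  have hev : ∀ m l, ∀ᶠ n in atTop,
      ENNReal.ofReal (pA (AA m n - AA l n)) < ENNReal.ofReal (c m + c l) := by
    intro m l
    refine eventually_lt_of_limsup_lt ?_ (by isBoundedDefault)
    calc limsup (fun n => ENNReal.ofReal (pA (AA m n - AA l n))) atTop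
        = rho (fun n => AA m n - AA l n) := rfl
      _ ≤ ENNReal.ofReal ((c m + c l)/2) := hrho m l
      _ < ENNReal.ofReal (c m + c l) := by
          refine (ENNReal.ofReal_lt_ofReal_iff ?_).mpr ?_
          · have := hc_pos m; have := hc_pos l; positivity
          · have := hc_pos m; have := hc_pos l; linarith
  have hbig : ∀ l, ∀ᶠ n in atTop, ∀ m ≤ l, ∀ m' ≤ l,
      ENNReal.ofReal (pA (AA m n - AA m' n)) < ENNReal.ofReal (c m + c m') := by
    intro l
    have h1 := (Finset.range (l+1)).eventually_all.mpr
      (fun m (_ : m ∈ Finset.range (l+1)) => (Finset.range (l+1)).eventually_all.mpr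
        (fun m' (_ : m' ∈ Finset.range (l+1)) => hev m m'))
    filter_upwards [h1] with n hn m hm m' hm'
    exact hn m (Finset.mem_range.mpr (Nat.lt_succ_of_le hm)) m'
      (Finset.mem_range.mpr (Nat.lt_succ_of_le hm'))
  have hW : ∀ l, ∃ N, ∀ n ≥ N, ∀ m ≤ l, ∀ m' ≤ l,
      ENNReal.ofReal (pA (AA m n - AA m' n)) < ENNReal.ofReal (c m + c m') :=
    fun l => eventually_atTop.mp (hbig l)
  choose W hWs using hW
  set N : ℕ → ℕ := fun l => Nat.rec (W 0) (fun l ih => max (ih + 1) (W (l+1))) l with hN_def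
  have hNW : ∀ l, W l ≤ N l := by
    intro l
    cases l with
    | zero => exact le_rfl
    | succ l => exact le_max_right _ _
  have hNmono : Monotone N := by
    have : StrictMono N := strictMono_nat_of_lt_succ
      (fun l => lt_of_lt_of_le (Nat.lt_succ_self _) (le_max_left _ _))
    exact this.monotone
  set φ : ℕ → ℕ := fun n => Nat.findGreatest (fun l => N l ≤ n) n with hφ_def
  set A : (n : ℕ) → Matrix (Fin n) (Fin n) ℂ := fun n => AA (φ n) n with hA_def
  have hφ_ge : ∀ l n, max (N l) l ≤ n → l ≤ φ n := by
    intro l n hn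
    exact Nat.le_findGreatest (le_trans (le_max_right _ _) hn)
      (le_trans (le_max_left _ _) hn)
  have hφ_N : ∀ l n, max (N l) l ≤ n → N (φ n) ≤ n := by
    intro l n hn
    have hNl : N l ≤ n := le_trans (le_max_left _ _) hn
    have h0n : N 0 ≤ n := le_trans (hNmono (Nat.zero_le l)) hNl
    simp only [hφ_def]
    exact Nat.findGreatest_spec (P := fun l => N l ≤ n) (m := 0) (Nat.zero_le n) h0n
  -- dacs bound
  have hdacs_le : ∀ m, dacs (AA m) A ≤ ENNReal.ofReal (c m) := by
    intro m
    refine ENNReal.le_of_forall_pos_le_add fun δ hδ _ => ?_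
    obtain ⟨l0, hl0⟩ := exists_pow_lt_of_lt_one (x := (δ:ℝ)) (y := (1/2:ℝ))
      (by exact_mod_cast hδ) (by norm_num)
    have hcl : ENNReal.ofReal (c (max m l0)) ≤ (δ : ℝ≥0∞) := by
      have h1 : c (max m l0) ≤ c l0 := hc_anti (le_max_right _ _)
      have h2 : ENNReal.ofReal (c (max m l0)) ≤ ENNReal.ofReal (δ:ℝ) :=
        ENNReal.ofReal_le_ofReal (le_trans h1 hl0.le)
      rwa [ENNReal.ofReal_coe_nnreal] at h2
    have hevn : ∀ᶠ n in atTop,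
        ENNReal.ofReal (pA (AA m n - A n)) ≤ ENNReal.ofReal (c m + c (max m l0)) := by
      filter_upwards [eventually_ge_atTop (max (N (max m l0)) (max m l0))] with n hn
      have h1 : max m l0 ≤ φ n := hφ_ge _ n hn
      have h2 : N (φ n) ≤ n := hφ_N _ n hn
      have h3 : W (φ n) ≤ n := le_trans (hNW _) h2
      have h4 := hWs (φ n) n h3 m (le_trans (le_max_left m l0) h1) (φ n) le_rfl
      simp only [hA_def]
      refine le_trans h4.le (ENNReal.ofReal_le_ofReal ?_)
      have h5 := hc_anti h1
      linarith
    calc dacs (AA m) A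
        = limsup (fun n => ENNReal.ofReal (pA (AA m n - A n))) atTop := rfl
      _ ≤ ENNReal.ofReal (c m + c (max m l0)) := limsup_le_of_le (by isBoundedDefault) hevn
      _ ≤ ENNReal.ofReal (c m) + ENNReal.ofReal (c (max m l0)) := ENNReal.ofReal_add_le
      _ ≤ ENNReal.ofReal (c m) + δ := add_le_add_right hcl _
  have h0' : Tendsto (fun m => ENNReal.ofReal (c m)) atTop (nhds 0) := by
    have h1 : Tendsto c atTop (nhds 0) :=
      tendsto_pow_atTop_nhds_zero_of_lt_one (by norm_num) (by norm_num)
    have h2 := ENNReal.tendsto_ofReal h1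
    simpa using h2
  have hdacs : Tendsto (fun m => dacs (AA m) A) atTop (nhds 0) :=
    tendsto_of_tendsto_of_tendsto_of_le_of_le tendsto_const_nhds h0'
      (fun m => zero_le) hdacs_le
  have hdm0 : Tendsto (fun m => dm D (hs m) k) atTop (nhds 0) := by
    have hle : ∀ m, dm D (hs m) k ≤ ENNReal.ofReal (c m) := by
      intro m
      rw [dm_comm]
      refine le_trans (hdmk m).le (ENNReal.ofReal_le_ofReal ?_)
      have := hc_pos m
      linarith
    exact tendsto_of_tendsto_of_tendsto_of_le_of_le tendsto_const_nhds h0'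
      (fun m => zero_le) hle
  exact ⟨A, hclosed AA hs A k hk hmem hdacs hdm0⟩
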